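/- Let (𝒰,𝒱) be a cotorsion pair on an exact category 𝓑 with enough projectives and injectives, with associated half exact functor H : 𝓑 → 𝓗/𝒲. For an object B ∈ 𝓑, H(B) = 0 if and only if B ∈ add(𝒰 ∗ 𝒱), i.e. there exist an object Y and a short exact sequence U ↣ B ⊕ Y ↠ V with U ∈ 𝒰 and V ∈ 𝒱. -/

import Mathlib

open CategoryTheory Limits ZeroObject

universe v u

variable (C : Type u) [Category.{v} C] [Preadditive C] [HasZeroObject C]
  [HasBinaryBiproducts C]

/-- An exact structure (in the sense of Quillen) on an additive category,
given by a class of short exact sequences (conflations). -/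
structure ExactStructure : Type (max u (v + 1)) where
  /-- the class of short exact sequences -/
  IsSES : ∀ {A B X : C}, (A ⟶ B) → (B ⟶ X) → Prop
  comp_zero : ∀ {A B X : C} {f : A ⟶ B} {g : B ⟶ X}, IsSES f g → f ≫ g = 0
  isKernel : ∀ {A B X : C} {f : A ⟶ B} {g : B ⟶ X} (h : IsSES f g),
      Nonempty (IsLimit (KernelFork.ofι f (comp_zero h)))
  isCokernel : ∀ {A B X : C} {f : A ⟶ B} {g : B ⟶ X} (h : IsSES f g),
      Nonempty (IsColimit (CokernelCofork.ofπ g (comp_zero h)))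
  ses_iso_congr : ∀ {A B X A' B' X' : C} {f : A ⟶ B} {g : B ⟶ X}
      (eA : A' ≅ A) (eB : B ≅ B') (eX : X ≅ X'), IsSES f g →
      IsSES (eA.hom ≫ f ≫ eB.hom) (eB.inv ≫ g ≫ eX.hom)
  id_ses : ∀ A : C, IsSES (𝟙 A) (0 : A ⟶ 0)
  id_ses' : ∀ A : C, IsSES (0 : (0 : C) ⟶ A) (𝟙 A)
  infl_comp : ∀ {A B X : C} (f : A ⟶ B) (f' : B ⟶ X),
      (∃ (Z : C) (g : B ⟶ Z), IsSES f g) → (∃ (Z : C) (g : X ⟶ Z), IsSES f' g) →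
      ∃ (Z : C) (g : X ⟶ Z), IsSES (f ≫ f') g
  defl_comp : ∀ {A B X : C} (g : A ⟶ B) (g' : B ⟶ X),
      (∃ (Z : C) (f : Z ⟶ A), IsSES f g) → (∃ (Z : C) (f : Z ⟶ B), IsSES f g') →
      ∃ (Z : C) (f : Z ⟶ A), IsSES f (g ≫ g')
  pushout_infl : ∀ {A B A' : C} (f : A ⟶ B) (a : A ⟶ A'),
      (∃ (Z : C) (g : B ⟶ Z), IsSES f g) →
      ∃ (P : C) (f' : A' ⟶ P) (b : B ⟶ P), IsPushout a f f' b ∧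
        ∃ (Z : C) (g : P ⟶ Z), IsSES f' g
  pullback_defl : ∀ {B X X' : C} (g : B ⟶ X) (x : X' ⟶ X),
      (∃ (Z : C) (f : Z ⟶ B), IsSES f g) →
      ∃ (P : C) (g' : P ⟶ X') (b : P ⟶ B), IsPullback g' b x g ∧
        ∃ (Z : C) (f : Z ⟶ P), IsSES f g'

variable {C}

namespace ExactStructure

variable (E : ExactStructure C)

/-- inflations (admissible monomorphisms) -/
def Infl {A B : C} (f : A ⟶ B) : Prop := ∃ (X : C) (g : B ⟶ X), E.IsSES f g

/-- deflations (admissible epimorphisms) -/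
def Defl {B X : C} (g : B ⟶ X) : Prop := ∃ (A : C) (f : A ⟶ B), E.IsSES f g

/-- projective objects relative to the exact structure -/
def Proj (P : C) : Prop :=
  ∀ ⦃B X : C⦄ (g : B ⟶ X), E.Defl g → ∀ h : P ⟶ X, ∃ l : P ⟶ B, l ≫ g = h

/-- injective objects relative to the exact structure -/
def Inj (I : C) : Prop :=
  ∀ ⦃A B : C⦄ (f : A ⟶ B), E.Infl f → ∀ h : A ⟶ I, ∃ l : B ⟶ I, f ≫ l = h

/-- the exact category has enough projectives -/
def EnoughProj : Prop :=
  ∀ X : C, ∃ (P K : C) (i : K ⟶ P) (p : P ⟶ X), E.Proj P ∧ E.IsSES i p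

/-- the exact category has enough injectives -/
def EnoughInj : Prop :=
  ∀ X : C, ∃ (I Z : C) (i : X ⟶ I) (p : I ⟶ Z), E.Inj I ∧ E.IsSES i p

end ExactStructure

/-- a morphism factors through an object of a given class of objects -/
def FactorsThru (S : Set C) {X Y : C} (f : X ⟶ Y) : Prop :=
  ∃ (W : C) (a : X ⟶ W) (b : W ⟶ Y), W ∈ S ∧ a ≫ b = f

/-- A cotorsion pair `(𝒰, 𝒱)` on the exact category `(C, E)`. -/
structure CotorsionPair (E : ExactStructure C) where
  U : Set C
  V : Set C
  U_summand : ∀ ⦃X Z : C⦄, Z ∈ U → (∃ (i : X ⟶ Z) (r : Z ⟶ X), i ≫ r = 𝟙 X) → X ∈ U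
  V_summand : ∀ ⦃X Z : C⦄, Z ∈ V → (∃ (i : X ⟶ Z) (r : Z ⟶ X), i ≫ r = 𝟙 X) → X ∈ V
  U_add : ∀ ⦃X Y : C⦄, X ∈ U → Y ∈ U → (X ⊞ Y) ∈ U
  V_add : ∀ ⦃X Y : C⦄, X ∈ V → Y ∈ V → (X ⊞ Y) ∈ V
  ext_vanish : ∀ ⦃A B X : C⦄ {f : A ⟶ B} {g : B ⟶ X}, E.IsSES f g → X ∈ U → A ∈ V →
      ∃ r : B ⟶ A, f ≫ r = 𝟙 A
  res : ∀ B : C, ∃ (VB UB : C) (i : VB ⟶ UB) (p : UB ⟶ B),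
      VB ∈ V ∧ UB ∈ U ∧ E.IsSES i p
  cores : ∀ B : C, ∃ (VB UB : C) (i : B ⟶ VB) (p : VB ⟶ UB),
      VB ∈ V ∧ UB ∈ U ∧ E.IsSES i p

namespace CotorsionPair

variable {E : ExactStructure C} (CP : CotorsionPair E)

/-- `𝒲 = 𝒰 ∩ 𝒱` -/
def W : Set C := CP.U ∩ CP.V

/-- `𝓑⁺`: objects admitting a short exact sequence `V ↣ W ↠ B` with `V ∈ 𝒱`, `W ∈ 𝒲`. -/
def Bplus : Set C :=
  {B | ∃ (V₀ W₀ : C) (i : V₀ ⟶ W₀) (p : W₀ ⟶ B), V₀ ∈ CP.V ∧ W₀ ∈ CP.W ∧ E.IsSES i p}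

/-- `𝓑⁻`: objects admitting a short exact sequence `B ↣ W ↠ U` with `W ∈ 𝒲`, `U ∈ 𝒰`. -/
def Bminus : Set C :=
  {B | ∃ (W₀ U₀ : C) (i : B ⟶ W₀) (p : W₀ ⟶ U₀), W₀ ∈ CP.W ∧ U₀ ∈ CP.U ∧ E.IsSES i p}

/-- the heart subcategory `𝓗 = 𝓑⁺ ∩ 𝓑⁻` -/
def Heart : Set C := CP.Bplus ∩ CP.Bminus

/-- the ideal relation defining the additive quotient `𝓑/𝒲` -/
def wRel : HomRel C := fun {X Y} f g =>
  ∃ (W : C) (a : X ⟶ W) (b : W ⟶ Y), W ∈ CP.W ∧ a ≫ b = f - g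

/-- the quotient category `𝓑/𝒲` -/
abbrev QW := CategoryTheory.Quotient CP.wRel

/-- the quotient functor `π : 𝓑 → 𝓑/𝒲` -/
abbrev qf : C ⥤ CP.QW := Quotient.functor _

/-- `𝓑⁺/𝒲` as a full subcategory of `𝓑/𝒲` -/
abbrev BplusCat := ObjectProperty.FullSubcategory (fun X : CP.QW => X.as ∈ CP.Bplus)

/-- `𝓑⁻/𝒲` as a full subcategory of `𝓑/𝒲` -/
abbrev BminusCat := ObjectProperty.FullSubcategory (fun X : CP.QW => X.as ∈ CP.Bminus)

/-- the heart `𝓗/𝒲` as a full subcategory of `𝓑/𝒲` -/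
abbrev HeartCat := ObjectProperty.FullSubcategory (fun X : CP.QW => X.as ∈ CP.Heart)

/-- the inclusion `𝓑⁺/𝒲 ↪ 𝓑/𝒲` -/
abbrev inclPlus : CP.BplusCat ⥤ CP.QW := ObjectProperty.ι _

/-- the inclusion `𝓑⁻/𝒲 ↪ 𝓑/𝒲` -/
abbrev inclMinus : CP.BminusCat ⥤ CP.QW := ObjectProperty.ι _

/-- the inclusion `𝓗/𝒲 ↪ 𝓑/𝒲` -/
abbrev inclHeart : CP.HeartCat ⥤ CP.QW := ObjectProperty.ι _

/-- `add(𝒰 ∗ 𝒱)`: objects `X` admitting a short exact sequence `U ↣ X ⊕ Y ↠ V`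
with `U ∈ 𝒰`, `V ∈ 𝒱`. -/
def addUV : Set C :=
  {X | ∃ (Y U₀ V₀ : C) (i : U₀ ⟶ X ⊞ Y) (p : X ⊞ Y ⟶ V₀),
    U₀ ∈ CP.U ∧ V₀ ∈ CP.V ∧ E.IsSES i p}

end CotorsionPair



set_option linter.unusedSectionVars false
set_option maxHeartbeats 1000000

/-! ### Toolkit for exact structures -/

namespace ExactStructure

variable {E : ExactStructure C}

noncomputable def ses_kernelIsLimit {A B X : C} {f : A ⟶ B} {g : B ⟶ X} (h : E.IsSES f g) :
    IsLimit (KernelFork.ofι f (E.comp_zero h)) := (E.isKernel h).some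

noncomputable def ses_cokernelIsColimit {A B X : C} {f : A ⟶ B} {g : B ⟶ X} (h : E.IsSES f g) :
    IsColimit (CokernelCofork.ofπ g (E.comp_zero h)) := (E.isCokernel h).some

theorem ses_mono {A B X : C} {f : A ⟶ B} {g : B ⟶ X} (h : E.IsSES f g) : Mono f := by
  constructor
  intro T u v huv
  exact Fork.IsLimit.hom_ext (ses_kernelIsLimit h) (by simpa using huv)

theorem ses_epi {A B X : C} {f : A ⟶ B} {g : B ⟶ X} (h : E.IsSES f g) : Epi g := by
  constructor
  intro T u v huv
  exact Cofork.IsColimit.hom_ext (ses_cokernelIsColimit h) (by simpa using huv)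

theorem ses_kernel_lift {A B X T : C} {f : A ⟶ B} {g : B ⟶ X} (h : E.IsSES f g)
    (t : T ⟶ B) (ht : t ≫ g = 0) : ∃ u : T ⟶ A, u ≫ f = t := by
  obtain ⟨l, hl⟩ := KernelFork.IsLimit.lift' (ses_kernelIsLimit h) t ht
  exact ⟨l, by simpa using hl⟩

theorem ses_coker_desc {A B X T : C} {f : A ⟶ B} {g : B ⟶ X} (h : E.IsSES f g)
    (t : B ⟶ T) (ht : f ≫ t = 0) : ∃ u : X ⟶ T, g ≫ u = t := by
  obtain ⟨l, hl⟩ := CokernelCofork.IsColimit.desc' (ses_cokernelIsColimit h) t ht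
  exact ⟨l, by simpa using hl⟩

theorem ses_congr_left {A A' B X : C} {f : A ⟶ B} {g : B ⟶ X} (h : E.IsSES f g) (e : A' ≅ A) :
    E.IsSES (e.hom ≫ f) g := by
  simpa using E.ses_iso_congr e (Iso.refl B) (Iso.refl X) h

theorem ses_congr_right {A B X X' : C} {f : A ⟶ B} {g : B ⟶ X} (h : E.IsSES f g) (e : X ≅ X') :
    E.IsSES f (g ≫ e.hom) := by
  simpa using E.ses_iso_congr (Iso.refl A) (Iso.refl B) e h

theorem ses_congr_mid {A B B' X : C} {f : A ⟶ B} {g : B ⟶ X} (h : E.IsSES f g) (e : B ≅ B') :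
    E.IsSES (f ≫ e.hom) (e.inv ≫ g) := by
  simpa using E.ses_iso_congr (Iso.refl A) e (Iso.refl X) h

/-- If `(f, g)` is a conflation and `t` is another cokernel of `f`, then `(f, t)` is
a conflation. -/
theorem isSES_of_isCokernel {A B X X' : C} {f : A ⟶ B} {g : B ⟶ X} (h : E.IsSES f g)
    {t : B ⟶ X'} (ht : f ≫ t = 0)
    (huniv : ∀ {T : C} (u : B ⟶ T), f ≫ u = 0 → ∃! w : X' ⟶ T, t ≫ w = u) :
    E.IsSES f t := by
  obtain ⟨w₂, hw₂, -⟩ := huniv g (E.comp_zero h)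
  obtain ⟨w₁, hw₁⟩ := ses_coker_desc h t ht
  have hepi : Epi g := ses_epi h
  have h₁ : w₁ ≫ w₂ = 𝟙 X := by
    rw [← cancel_epi g, Category.comp_id, ← Category.assoc, hw₁, hw₂]
  have h₂ : w₂ ≫ w₁ = 𝟙 X' := by
    have e1 : t ≫ (w₂ ≫ w₁) = t := by rw [← Category.assoc, hw₂, hw₁]
    obtain ⟨w, hw, hwu⟩ := huniv t ht
    exact (hwu _ e1).trans (hwu _ (Category.comp_id t)).symm
  have := ses_congr_right h (⟨w₁, w₂, h₁, h₂⟩ : X ≅ X')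
  rwa [hw₁] at this

/-- If `(f, g)` is a conflation and `t` is another kernel of `g`, then `(t, g)` is
a conflation. -/
theorem isSES_of_isKernel {A B X K : C} {f : A ⟶ B} {g : B ⟶ X} (h : E.IsSES f g)
    {t : K ⟶ B} (ht : t ≫ g = 0)
    (huniv : ∀ {T : C} (u : T ⟶ B), u ≫ g = 0 → ∃! w : T ⟶ K, w ≫ t = u) :
    E.IsSES t g := by
  obtain ⟨w₂, hw₂, -⟩ := huniv f (E.comp_zero h)
  obtain ⟨w₁, hw₁⟩ := ses_kernel_lift h t ht
  have hmono : Mono f := ses_mono h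
  have h₁ : w₁ ≫ w₂ = 𝟙 K := by
    have e1 : (w₁ ≫ w₂) ≫ t = t := by rw [Category.assoc, hw₂, hw₁]
    obtain ⟨w, hw, hwu⟩ := huniv t ht
    exact (hwu _ e1).trans (hwu _ (Category.id_comp t)).symm
  have h₂ : w₂ ≫ w₁ = 𝟙 A := by
    rw [← cancel_mono f, Category.id_comp, Category.assoc, hw₁, hw₂]
  have := ses_congr_left h (⟨w₁, w₂, h₁, h₂⟩ : K ≅ A)
  rwa [hw₁] at this

end ExactStructure

namespace ExactStructure

variable {E : ExactStructure C}

/-- Pulling back a conflation along an arbitrary pullback square with the same cospan: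
the kernel is preserved. -/
theorem ses_of_isPullback {A B X X' P : C} {f : A ⟶ B} {g : B ⟶ X} (hfg : E.IsSES f g)
    {x : X' ⟶ X} {p₁ : P ⟶ X'} {p₂ : P ⟶ B} (hpb : IsPullback p₁ p₂ x g) :
    ∃ χ : A ⟶ P, χ ≫ p₁ = 0 ∧ χ ≫ p₂ = f ∧ E.IsSES χ p₁ := by
  obtain ⟨P₀, g₀, b₀, hpb₀, Z₀, f₀, h₀⟩ := E.pullback_defl g x ⟨A, f, hfg⟩
  obtain ⟨e, he₁, he₂⟩ : ∃ e : P ≅ P₀, e.hom ≫ g₀ = p₁ ∧ e.hom ≫ b₀ = p₂ :=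
    ⟨IsPullback.isoIsPullback _ _ hpb hpb₀, IsPullback.isoIsPullback_hom_fst _ _ hpb hpb₀,
      IsPullback.isoIsPullback_hom_snd _ _ hpb hpb₀⟩
  have hP₁ : E.IsSES (f₀ ≫ e.inv) p₁ := by
    have h' := ses_congr_mid h₀ e.symm
    simp only [Iso.symm_hom, Iso.symm_inv] at h'
    rwa [he₁] at h'
  refine ⟨hpb.lift 0 f (by rw [Limits.zero_comp, E.comp_zero hfg]), hpb.lift_fst _ _ _,
    hpb.lift_snd _ _ _, ?_⟩
  refine isSES_of_isKernel hP₁ (hpb.lift_fst _ _ _) ?_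
  intro T u hu
  obtain ⟨w₃, hw₃⟩ := ses_kernel_lift hfg (u ≫ p₂)
    (by rw [Category.assoc, ← hpb.w, ← Category.assoc, hu, Limits.zero_comp])
  refine ⟨w₃, hpb.hom_ext ?_ ?_, ?_⟩
  · rw [Category.assoc, hpb.lift_fst, Limits.comp_zero, hu]
  · rw [Category.assoc, hpb.lift_snd, hw₃]
  · intro w' hw'
    have : w' ≫ f = u ≫ p₂ := by
      rw [← hpb.lift_snd (0 : A ⟶ X') f (by rw [Limits.zero_comp, E.comp_zero hfg]),
        ← Category.assoc, hw']
    have hm : Mono f := ses_mono hfg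
    rw [← cancel_mono f, this, hw₃]

/-- Pushing out a conflation along an arbitrary pushout square with the same span:
the cokernel is preserved. -/
theorem ses_of_isPushout {A B X A' P : C} {f : A ⟶ B} {g : B ⟶ X} (hfg : E.IsSES f g)
    {a : A ⟶ A'} {f' : A' ⟶ P} {b : B ⟶ P} (hpo : IsPushout a f f' b) :
    ∃ g' : P ⟶ X, f' ≫ g' = 0 ∧ b ≫ g' = g ∧ E.IsSES f' g' := by
  obtain ⟨P₀, f₀', b₀, hpo₀, Z₀, g₀, h₀⟩ := E.pushout_infl f a ⟨X, g, hfg⟩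
  obtain ⟨e, he₁, he₂⟩ : ∃ e : P₀ ≅ P, f' ≫ e.inv = f₀' ∧ b ≫ e.inv = b₀ :=
    ⟨IsPushout.isoIsPushout _ _ hpo₀ hpo, IsPushout.inl_isoIsPushout_inv _ _ hpo₀ hpo,
      IsPushout.inr_isoIsPushout_inv _ _ hpo₀ hpo⟩
  have hP₁ : E.IsSES f' (e.inv ≫ g₀) := by
    have h' := ses_congr_mid h₀ e
    rw [← he₁] at h'
    simpa using h'
  refine ⟨hpo.desc 0 g (by rw [Limits.comp_zero, E.comp_zero hfg]), hpo.inl_desc _ _ _,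
    hpo.inr_desc _ _ _, ?_⟩
  refine isSES_of_isCokernel hP₁ (hpo.inl_desc _ _ _) ?_
  intro T u hu
  obtain ⟨w₃, hw₃⟩ := ses_coker_desc hfg (b ≫ u)
    (by rw [← Category.assoc, ← hpo.w, Category.assoc, hu, Limits.comp_zero])
  refine ⟨w₃, hpo.hom_ext ?_ ?_, ?_⟩
  · rw [← Category.assoc, hpo.inl_desc, Limits.zero_comp, hu]
  · rw [← Category.assoc, hpo.inr_desc, hw₃]
  · intro w' hw'
    have : g ≫ w' = b ≫ u := by
      rw [← hpo.inr_desc (0 : A' ⟶ X) g (by rw [Limits.comp_zero, E.comp_zero hfg]),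
        Category.assoc, hw']
    have hep : Epi g := ses_epi hfg
    rw [← cancel_epi g, this, hw₃]

/-- In a pushout square of an inflation along a deflation, the parallel map is a
deflation with the same kernel. -/
theorem ses_parallel_of_isPushout {K A B A' P : C} {k₀ : K ⟶ A} {a : A ⟶ A'}
    (hka : E.IsSES k₀ a) {f : A ⟶ B} (hf : E.Infl f) {f' : A' ⟶ P} {b : B ⟶ P}
    (hpo : IsPushout a f f' b) : E.IsSES (k₀ ≫ f) b := by
  obtain ⟨Z₃, g₃, h₃⟩ := E.infl_comp k₀ f ⟨A', a, hka⟩ hf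
  refine isSES_of_isCokernel h₃ ?_ ?_
  · rw [Category.assoc, ← hpo.w, ← Category.assoc, E.comp_zero hka, Limits.zero_comp]
  · intro T u hu
    obtain ⟨s₁, hs₁⟩ := ses_coker_desc hka (f ≫ u) (by rw [← Category.assoc]; exact hu)
    refine ⟨hpo.desc s₁ u hs₁, hpo.inr_desc _ _ _, ?_⟩
    intro w'' hw''
    have hf'w : f' ≫ w'' = s₁ := by
      have hep : Epi a := ses_epi hka
      rw [← cancel_epi a, ← Category.assoc, hpo.w, Category.assoc, hw'', hs₁]
    exact hpo.hom_ext (by rw [hf'w, hpo.inl_desc]) (by rw [hw'', hpo.inr_desc])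

/-- In a pullback square of a deflation along an inflation, the parallel map is an
inflation with the same cokernel. -/
theorem ses_parallel_of_isPullback {P B₀ B₁ X Q : C} {p₁ : P ⟶ B₀} {p₂ : P ⟶ B₁}
    {x : B₀ ⟶ X} {w : X ⟶ Q} (hxw : E.IsSES x w) {g : B₁ ⟶ X} (hg : E.Defl g)
    (hpb : IsPullback p₁ p₂ x g) : E.IsSES p₂ (g ≫ w) := by
  obtain ⟨K₇, f₃, h₃⟩ := E.defl_comp g w hg ⟨B₀, x, hxw⟩
  refine isSES_of_isKernel h₃ ?_ ?_
  · rw [← Category.assoc, ← hpb.w, Category.assoc, E.comp_zero hxw, Limits.comp_zero]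
  · intro T u hu
    obtain ⟨u₁, hu₁⟩ := ses_kernel_lift hxw (u ≫ g) (by rw [Category.assoc]; exact hu)
    refine ⟨hpb.lift u₁ u hu₁, hpb.lift_snd _ _ _, ?_⟩
    intro w'' hw''
    have hw₁ : w'' ≫ p₁ = u₁ := by
      have hm : Mono x := ses_mono hxw
      rw [← cancel_mono x, Category.assoc, hpb.w, ← Category.assoc, hw'', hu₁]
    exact hpb.hom_ext (by rw [hw₁, hpb.lift_fst]) (by rw [hw'', hpb.lift_snd])

theorem section_of_retraction {A B X : C} {f : A ⟶ B} {g : B ⟶ X} (h : E.IsSES f g)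
    {r : B ⟶ A} (hr : f ≫ r = 𝟙 A) : ∃ σ : X ⟶ B, σ ≫ g = 𝟙 X := by
  obtain ⟨σ, hσ⟩ := ses_coker_desc h (𝟙 B - r ≫ f)
    (by rw [Preadditive.comp_sub, Category.comp_id, ← Category.assoc, hr, Category.id_comp,
      sub_self])
  refine ⟨σ, ?_⟩
  have hep : Epi g := ses_epi h
  have hz : f ≫ g = 0 := E.comp_zero h
  rw [← cancel_epi g, ← Category.assoc, hσ]
  simp [Preadditive.sub_comp, Category.assoc, hz]

theorem retraction_of_section {A B X : C} {f : A ⟶ B} {g : B ⟶ X} (h : E.IsSES f g)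
    {σ : X ⟶ B} (hσ : σ ≫ g = 𝟙 X) : ∃ r : B ⟶ A, f ≫ r = 𝟙 A := by
  obtain ⟨r, hrr⟩ := ses_kernel_lift h (𝟙 B - g ≫ σ)
    (by rw [Preadditive.sub_comp, Category.id_comp, Category.assoc, hσ, Category.comp_id,
      sub_self])
  refine ⟨r, ?_⟩
  have hm : Mono f := ses_mono h
  have hz : f ≫ g = 0 := E.comp_zero h
  rw [← cancel_mono f, Category.assoc, hrr]
  simp [Preadditive.comp_sub, ← Category.assoc, hz]

end ExactStructure

namespace ExactStructure

variable {E : ExactStructure C}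

theorem isPullback_biprod_zero (X Y : C) :
    IsPullback (biprod.snd : X ⊞ Y ⟶ Y) (biprod.fst : X ⊞ Y ⟶ X)
      (0 : Y ⟶ (0 : C)) (0 : X ⟶ (0 : C)) := by
  have comm : (biprod.snd : X ⊞ Y ⟶ Y) ≫ (0 : Y ⟶ (0 : C)) =
      (biprod.fst : X ⊞ Y ⟶ X) ≫ (0 : X ⟶ (0 : C)) := by simp
  exact IsPullback.of_isLimit (PullbackCone.IsLimit.mk comm
    (fun s => biprod.lift s.snd s.fst)
    (fun s => by simp) (fun s => by simp)
    (fun s m h₁ h₂ => by apply biprod.hom_ext <;> simp [h₁, h₂]))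

theorem ses_biprod_inl_snd (X Y : C) :
    E.IsSES (biprod.inl : X ⟶ X ⊞ Y) (biprod.snd : X ⊞ Y ⟶ Y) := by
  obtain ⟨P₀, g₀, b₀, hpb₀, Z₀, f₀, h₀⟩ :=
    E.pullback_defl (0 : X ⟶ (0 : C)) (0 : Y ⟶ (0 : C)) ⟨X, 𝟙 X, E.id_ses X⟩
  obtain ⟨e, he₁, he₂⟩ : ∃ e : (X ⊞ Y) ≅ P₀, e.hom ≫ g₀ = biprod.snd ∧
      e.hom ≫ b₀ = biprod.fst :=
    ⟨IsPullback.isoIsPullback _ _ (isPullback_biprod_zero X Y) hpb₀,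
      IsPullback.isoIsPullback_hom_fst _ _ (isPullback_biprod_zero X Y) hpb₀,
      IsPullback.isoIsPullback_hom_snd _ _ (isPullback_biprod_zero X Y) hpb₀⟩
  have hsnd : E.IsSES (f₀ ≫ e.inv) (biprod.snd : X ⊞ Y ⟶ Y) := by
    have h' := ses_congr_mid h₀ e.symm
    simp only [Iso.symm_hom, Iso.symm_inv] at h'
    rwa [he₁] at h'
  refine isSES_of_isKernel hsnd (by simp) ?_
  intro T u hu
  refine ⟨u ≫ biprod.fst, ?_, ?_⟩
  · apply biprod.hom_ext <;> simp [hu]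
  · intro w' hw'
    rw [← hw']; simp

theorem ses_biprod_inr_fst (X Y : C) :
    E.IsSES (biprod.inr : Y ⟶ X ⊞ Y) (biprod.fst : X ⊞ Y ⟶ X) := by
  have h := ses_biprod_inl_snd (E := E) Y X
  have h' := ses_congr_mid h (biprod.braiding Y X)
  have e1 : (biprod.inl : Y ⟶ Y ⊞ X) ≫ (biprod.braiding Y X).hom = biprod.inr := by
    apply biprod.hom_ext <;> simp [biprod.braiding]
  have e2 : (biprod.braiding Y X).inv ≫ (biprod.snd : Y ⊞ X ⟶ X) = biprod.fst := by
    simp [biprod.braiding]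
  rwa [e1, e2] at h'

/-- A split short sequence is a conflation. -/
theorem ses_of_split {A B X : C} {f : A ⟶ B} {g : B ⟶ X} (r : B ⟶ A) (σ : X ⟶ B)
    (hfg : f ≫ g = 0) (hσr : σ ≫ r = 0) (hr : f ≫ r = 𝟙 A) (hσ : σ ≫ g = 𝟙 X)
    (hid : r ≫ f + g ≫ σ = 𝟙 B) : E.IsSES f g := by
  have pf₁ : biprod.desc f σ ≫ biprod.lift r g = 𝟙 (A ⊞ X) := by
    apply biprod.hom_ext' <;> apply biprod.hom_ext <;>
      simp [hr, hσ, hfg, hσr]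
  have pf₂ : biprod.lift r g ≫ biprod.desc f σ = 𝟙 B := by
    rw [biprod.lift_desc, hid]
  have h := ses_congr_mid (ses_biprod_inl_snd (E := E) A X)
    (⟨biprod.desc f σ, biprod.lift r g, pf₁, pf₂⟩ : (A ⊞ X) ≅ B)
  simpa using h

/-- Complementary conflation of a split conflation. -/
theorem ses_complement {A B X : C} {f : A ⟶ B} {g : B ⟶ X} (h : E.IsSES f g)
    {r : B ⟶ A} (hr : f ≫ r = 𝟙 A) :
    ∃ w : X ⟶ B, w ≫ g = 𝟙 X ∧ w ≫ r = 0 ∧ g ≫ w + r ≫ f = 𝟙 B ∧ E.IsSES w r := by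
  have hep : Epi g := ses_epi h
  obtain ⟨w, hw⟩ := ses_coker_desc h (𝟙 B - r ≫ f)
    (by rw [Preadditive.comp_sub, Category.comp_id, ← Category.assoc, hr, Category.id_comp,
      sub_self])
  have hwg : w ≫ g = 𝟙 X := by
    rw [← cancel_epi g, ← Category.assoc, hw, Preadditive.sub_comp, Category.id_comp,
      Category.assoc, E.comp_zero h, Limits.comp_zero, sub_zero, Category.comp_id]
  have hwr : w ≫ r = 0 := by
    rw [← cancel_epi g, ← Category.assoc, hw, Preadditive.sub_comp, Category.id_comp,
      Category.assoc, hr, Category.comp_id, sub_self, Limits.comp_zero]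
  have hid : g ≫ w + r ≫ f = 𝟙 B := by rw [hw]; abel
  refine ⟨w, hwg, hwr, hid, ?_⟩
  exact ses_of_split (f := w) (g := r) g f hwr (E.comp_zero h) hwg hr hid

/-- Direct sum with an identity: inflation side. -/
theorem ses_map_inr {A B X : C} {f : A ⟶ B} {g : B ⟶ X} (h : E.IsSES f g) (Y : C) :
    E.IsSES (f ≫ biprod.inr : A ⟶ Y ⊞ B) (biprod.map (𝟙 Y) g) := by
  have hpb : IsPullback (biprod.map (𝟙 Y) g) (biprod.snd : Y ⊞ B ⟶ B)
      (biprod.snd : Y ⊞ X ⟶ X) g := by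
    have comm : biprod.map (𝟙 Y) g ≫ (biprod.snd : Y ⊞ X ⟶ X) =
        (biprod.snd : Y ⊞ B ⟶ B) ≫ g := by simp
    exact IsPullback.of_isLimit (PullbackCone.IsLimit.mk comm
      (fun s => biprod.lift (s.fst ≫ biprod.fst) s.snd)
      (fun s => by
        apply biprod.hom_ext
        · simp
        · simpa using s.condition.symm)
      (fun s => by simp)
      (fun s m h₁ h₂ => by
        apply biprod.hom_ext
        · have := h₁ =≫ biprod.fst
          simpa using this
        · simpa using h₂))
  obtain ⟨χ, hχ₁, hχ₂, hχ⟩ := ses_of_isPullback h hpb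
  have hχeq : χ = f ≫ biprod.inr := by
    apply hpb.hom_ext
    · rw [hχ₁, Category.assoc]
      have : (biprod.inr : B ⟶ Y ⊞ B) ≫ biprod.map (𝟙 Y) g = g ≫ biprod.inr := by simp
      rw [this, ← Category.assoc, E.comp_zero h, Limits.zero_comp]
    · rw [hχ₂]; simp
  rwa [hχeq] at hχ

/-- Direct sum with an identity: other side. -/
theorem ses_map_inl {A B X : C} {f : A ⟶ B} {g : B ⟶ X} (h : E.IsSES f g) (Y : C) :
    E.IsSES (f ≫ biprod.inl : A ⟶ B ⊞ Y) (biprod.map g (𝟙 Y)) := by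
  have h' := E.ses_iso_congr (Iso.refl A) (biprod.braiding Y B) (biprod.braiding Y X)
    (ses_map_inr h Y)
  have e1 : (Iso.refl A).hom ≫ (f ≫ biprod.inr) ≫ (biprod.braiding Y B).hom =
      f ≫ biprod.inl := by
    rw [Iso.refl_hom, Category.id_comp, Category.assoc]
    congr 1
    apply biprod.hom_ext <;> simp [biprod.braiding]
  have e2 : (biprod.braiding Y B).inv ≫ biprod.map (𝟙 Y) g ≫ (biprod.braiding Y X).hom =
      biprod.map g (𝟙 Y) := by
    apply biprod.hom_ext' <;> apply biprod.hom_ext <;> simp [biprod.braiding]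
  rwa [e1, e2] at h'

/-- Bühler's 2.12: a pullback square of a deflation yields a conflation through the
biproduct. -/
theorem ses_pullback_biprod {A B X X' P : C} {f : A ⟶ B} {g : B ⟶ X} (hfg : E.IsSES f g)
    {x : X' ⟶ X} {p₁ : P ⟶ X'} {p₂ : P ⟶ B} (hpb : IsPullback p₁ p₂ x g) :
    E.IsSES (biprod.lift p₁ p₂) (biprod.desc x (-g)) := by
  have h₁ : E.IsSES (biprod.lift (𝟙 X') x) (biprod.desc x (-𝟙 X)) := by
    refine ses_of_split biprod.fst (-biprod.inr) (by simp) (by simp) (by simp) (by simp) ?_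
    apply biprod.hom_ext' <;> apply biprod.hom_ext <;> simp
  have hcomp : biprod.map (𝟙 X') g ≫ biprod.desc x (-𝟙 X) = biprod.desc x (-g) := by
    apply biprod.hom_ext' <;> simp
  obtain ⟨K₅, f₅, h₅⟩ := E.defl_comp (biprod.map (𝟙 X') g) (biprod.desc x (-𝟙 X))
    ⟨_, _, ses_map_inr hfg X'⟩ ⟨_, _, h₁⟩
  rw [hcomp] at h₅
  have hdesc : (biprod.desc x (-g) : X' ⊞ B ⟶ X) =
      biprod.fst ≫ x + biprod.snd ≫ (-g) := by
    apply biprod.hom_ext' <;> simp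
  refine isSES_of_isKernel h₅ ?_ ?_
  · rw [biprod.lift_desc, hpb.w]; simp
  · intro T u hu
    have hcond : (u ≫ biprod.fst) ≫ x = (u ≫ biprod.snd) ≫ g := by
      rw [hdesc] at hu
      simp only [Preadditive.comp_add, Preadditive.comp_neg, ← Category.assoc] at hu
      rw [← sub_eq_zero]
      simpa [sub_eq_add_neg] using hu
    refine ⟨hpb.lift (u ≫ biprod.fst) (u ≫ biprod.snd) hcond, ?_, ?_⟩
    · apply biprod.hom_ext <;> simp
    · intro w' hw'
      apply hpb.hom_ext
      · rw [hpb.lift_fst, ← hw']; simp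
      · rw [hpb.lift_snd, ← hw']; simp

/-- Noether: quotients of a tower of inflations. -/
theorem ses_noether {A B₁ B₂ C₁ C₂ : C} {f₁ : A ⟶ B₁} {g₁ : B₁ ⟶ C₁} (h₁ : E.IsSES f₁ g₁)
    {f₂ : B₁ ⟶ B₂} {g₂ : B₂ ⟶ C₂} (h₂ : E.IsSES f₂ g₂) :
    ∃ (C₃ : C) (g₃ : B₂ ⟶ C₃) (c : C₁ ⟶ C₃) (c' : C₃ ⟶ C₂),
      E.IsSES (f₁ ≫ f₂) g₃ ∧ g₁ ≫ c = f₂ ≫ g₃ ∧ g₃ ≫ c' = g₂ ∧ E.IsSES c c' := by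
  obtain ⟨P₆, f₆, b₆, hpo₆, hinfl₆⟩ := E.pushout_infl f₂ g₁ ⟨_, _, h₂⟩
  obtain ⟨g₆, hg₆0, hg₆, hses₆⟩ := ses_of_isPushout h₂ hpo₆
  have hb₆ : E.IsSES (f₁ ≫ f₂) b₆ := ses_parallel_of_isPushout h₁ ⟨_, _, h₂⟩ hpo₆
  exact ⟨P₆, b₆, f₆, g₆, hb₆, hpo₆.w.symm ▸ hpo₆.w, hg₆, hses₆⟩

/-- Co-Noether: kernels of a tower of deflations. -/
theorem ses_conoether {B C₁ C₂ A₁ A₂ : C} {a₁ : A₁ ⟶ B} {d₁ : B ⟶ C₁} (h₁ : E.IsSES a₁ d₁)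
    {a₂ : A₂ ⟶ C₁} {d₂ : C₁ ⟶ C₂} (h₂ : E.IsSES a₂ d₂) :
    ∃ (K : C) (κ : K ⟶ B) (j : A₁ ⟶ K) (k' : K ⟶ A₂),
      E.IsSES κ (d₁ ≫ d₂) ∧ j ≫ κ = a₁ ∧ κ ≫ d₁ = k' ≫ a₂ ∧ E.IsSES j k' := by
  obtain ⟨P, p₁, p₂, hpb, hdefl⟩ := E.pullback_defl d₁ a₂ ⟨_, _, h₁⟩
  obtain ⟨χ, hχ₁, hχ₂, hχ⟩ := ses_of_isPullback h₁ hpb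
  have hp₂ : E.IsSES p₂ (d₁ ≫ d₂) := ses_parallel_of_isPullback h₂ ⟨_, _, h₁⟩ hpb
  exact ⟨P, p₂, χ, p₁, hp₂, hχ₂, hpb.w.symm, hχ⟩
end ExactStructure

namespace CotorsionPair

open ExactStructure

variable {E : ExactStructure C} {CP : CotorsionPair E}

theorem zero_mem_U : (0 : C) ∈ CP.U := by
  obtain ⟨VB, UB, i, p, hV, hU, hses⟩ := CP.res (0 : C)
  exact CP.U_summand hU ⟨0, 0, (isZero_zero C).eq_of_src _ _⟩

theorem zero_mem_V : (0 : C) ∈ CP.V := by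
  obtain ⟨VB, UB, i, p, hV, hU, hses⟩ := CP.res (0 : C)
  exact CP.V_summand hV ⟨0, 0, (isZero_zero C).eq_of_src _ _⟩

theorem zero_mem_W : (0 : C) ∈ CP.W := ⟨zero_mem_U, zero_mem_V⟩

theorem W_subset_U {X : C} (h : X ∈ CP.W) : X ∈ CP.U := h.1
theorem W_subset_V {X : C} (h : X ∈ CP.W) : X ∈ CP.V := h.2

theorem W_add {X Y : C} (hX : X ∈ CP.W) (hY : Y ∈ CP.W) : (X ⊞ Y) ∈ CP.W :=
  ⟨CP.U_add hX.1 hY.1, CP.V_add hX.2 hY.2⟩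

theorem W_summand {X Z : C} (hZ : Z ∈ CP.W)
    (h : ∃ (i : X ⟶ Z) (r : Z ⟶ X), i ≫ r = 𝟙 X) : X ∈ CP.W :=
  ⟨CP.U_summand hZ.1 h, CP.V_summand hZ.2 h⟩

/-- Lift a map from a `𝒰`-object along a deflation with kernel in `𝒱`. -/
theorem lift_along_defl {A B X W : C} {f : A ⟶ B} {g : B ⟶ X} (h : E.IsSES f g)
    (hA : A ∈ CP.V) (hW : W ∈ CP.U) (t : W ⟶ X) : ∃ l : W ⟶ B, l ≫ g = t := by
  obtain ⟨P, g', b, hpb, hd⟩ := E.pullback_defl g t ⟨A, f, h⟩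
  obtain ⟨χ, hχ₁, hχ₂, hχ⟩ := ses_of_isPullback h hpb
  obtain ⟨r, hr⟩ := CP.ext_vanish hχ hW hA
  obtain ⟨σ, hσ⟩ := section_of_retraction hχ hr
  refine ⟨σ ≫ b, ?_⟩
  rw [Category.assoc, ← hpb.w, ← Category.assoc, hσ, Category.id_comp]

/-- Extend a map into a `𝒱`-object along an inflation with cokernel in `𝒰`. -/
theorem extend_along_infl {A B X V : C} {f : A ⟶ B} {g : B ⟶ X} (h : E.IsSES f g)
    (hX : X ∈ CP.U) (hV : V ∈ CP.V) (t : A ⟶ V) : ∃ l : B ⟶ V, f ≫ l = t := by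
  obtain ⟨P, f', b, hpo, hi⟩ := E.pushout_infl f t ⟨X, g, h⟩
  obtain ⟨g', hg'₁, hg'₂, hg'⟩ := ses_of_isPushout h hpo
  obtain ⟨r, hr⟩ := CP.ext_vanish hg' hX hV
  refine ⟨b ≫ r, ?_⟩
  rw [← Category.assoc, ← hpo.w, Category.assoc, hr, Category.comp_id]

/-- If the middle of a conflation with ends in `𝒰` receives a deflation with `𝒱`-kernel,
that deflation splits. -/
theorem section_of_U_mid {A₀ F B A X : C} {a₀ : A₀ ⟶ F} {e : F ⟶ B} (hFB : E.IsSES a₀ e)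
    (hA₀ : A₀ ∈ CP.V) {f : A ⟶ B} {g : B ⟶ X} (hB : E.IsSES f g) (hA : A ∈ CP.U)
    (hX : X ∈ CP.U) : ∃ σ : B ⟶ F, σ ≫ e = 𝟙 B := by
  obtain ⟨F₁, e', b₁, hpb, hd⟩ := E.pullback_defl e f ⟨A₀, a₀, hFB⟩
  obtain ⟨χ₅, hχ₁, hχ₂, hχ⟩ := ses_of_isPullback hFB hpb
  obtain ⟨r₅, hr₅⟩ := CP.ext_vanish hχ hA hA₀
  have hb₁ : E.IsSES b₁ (e ≫ g) := ses_parallel_of_isPullback hB ⟨A₀, a₀, hFB⟩ hpb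
  obtain ⟨ρ, hρ⟩ := extend_along_infl (CP := CP) hb₁ hX hA₀ r₅
  have hret : a₀ ≫ ρ = 𝟙 A₀ := by rw [← hχ₂, Category.assoc, hρ, hr₅]
  obtain ⟨σ, hσ⟩ := section_of_retraction hFB hret
  exact ⟨σ, hσ⟩

theorem U_ext {A B X : C} {f : A ⟶ B} {g : B ⟶ X} (h : E.IsSES f g)
    (hA : A ∈ CP.U) (hX : X ∈ CP.U) : B ∈ CP.U := by
  obtain ⟨VB, UB, i, p, hV, hU, hses⟩ := CP.res B
  obtain ⟨σ, hσ⟩ := section_of_U_mid (CP := CP) hses hV h hA hX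
  exact CP.U_summand hU ⟨σ, p, hσ⟩

/-- If the middle of a conflation with ends in `𝒱` admits an inflation with `𝒰`-cokernel,
that inflation splits. -/
theorem retraction_of_V_mid {B F X₀ A X : C} {a₀ : B ⟶ F} {e : F ⟶ X₀} (hBF : E.IsSES a₀ e)
    (hX₀ : X₀ ∈ CP.U) {f : A ⟶ B} {g : B ⟶ X} (hB : E.IsSES f g) (hA : A ∈ CP.V)
    (hX : X ∈ CP.V) : ∃ ρ : F ⟶ B, a₀ ≫ ρ = 𝟙 B := by
  obtain ⟨F₂, f', b₂, hpo, hi⟩ := E.pushout_infl a₀ g ⟨X₀, e, hBF⟩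
  -- hpo : IsPushout g a₀ f' b₂
  obtain ⟨g₂', hg₂'₁, hg₂'₂, hg₂'⟩ := ses_of_isPushout hBF hpo
  obtain ⟨r, hr⟩ := CP.ext_vanish hg₂' hX₀ hX
  have hb₂ : E.IsSES (f ≫ a₀) b₂ := ses_parallel_of_isPushout hB ⟨X₀, e, hBF⟩ hpo
  -- ψ := 𝟙 - r ≫ f' factors through the cokernel g₂'
  obtain ⟨lam, hlam⟩ := ses_coker_desc hg₂' (𝟙 F₂ - r ≫ f')
    (by rw [Preadditive.comp_sub, Category.comp_id, ← Category.assoc, hr, Category.id_comp,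
      sub_self])
  have hlamg : lam ≫ g₂' = 𝟙 X₀ := by
    have hep : Epi g₂' := ses_epi hg₂'
    rw [← cancel_epi g₂', ← Category.assoc, hlam, Preadditive.sub_comp, Category.id_comp,
      Category.assoc, E.comp_zero hg₂', Limits.comp_zero, sub_zero, Category.comp_id]
  -- pull b₂ back along lam
  obtain ⟨G, g_G, m_G, hpbG, hdG⟩ := E.pullback_defl b₂ lam ⟨A, f ≫ a₀, hb₂⟩
  obtain ⟨χG, hχG₁, hχG₂, hχG⟩ := ses_of_isPullback hb₂ hpbG
  obtain ⟨rG, hrG⟩ := CP.ext_vanish hχG hX₀ hA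
  obtain ⟨σG, hσG⟩ := section_of_retraction hχG hrG
  -- s₀ := σG ≫ m_G is a section of e
  have hm_Ge : m_G ≫ e = g_G := by
    rw [← hg₂'₂, ← Category.assoc, ← hpbG.w, Category.assoc, hlamg, Category.comp_id]
  have hs₀ : (σG ≫ m_G) ≫ e = 𝟙 X₀ := by rw [Category.assoc, hm_Ge, hσG]
  exact retraction_of_section hBF hs₀

theorem V_ext {A B X : C} {f : A ⟶ B} {g : B ⟶ X} (h : E.IsSES f g)
    (hA : A ∈ CP.V) (hX : X ∈ CP.V) : B ∈ CP.V := by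
  obtain ⟨VB, UB, i, p, hV, hU, hses⟩ := CP.cores B
  obtain ⟨ρ, hρ⟩ := retraction_of_V_mid (CP := CP) hses hU h hA hX
  exact CP.V_summand hV ⟨i, ρ, hρ⟩

/-- Key Lemma: any map from a `𝒰`-object to a `𝓑⁺`-object factors through `𝒲`. -/
theorem hom_factors_of_U_Bplus {N P : C} (hN : N ∈ CP.U) (hP : P ∈ CP.Bplus) (c : N ⟶ P) :
    FactorsThru CP.W c := by
  obtain ⟨V₀, W₀, i, p, hV₀, hW₀, hses⟩ := hP
  obtain ⟨l, hl⟩ := lift_along_defl (CP := CP) hses hV₀ hN c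
  exact ⟨W₀, l, p, hW₀, hl⟩

/-- Dual Key Lemma: any map from a `𝓑⁻`-object to a `𝒱`-object factors through `𝒲`. -/
theorem hom_factors_of_Bminus_V {N V : C} (hN : N ∈ CP.Bminus) (hV : V ∈ CP.V) (c : N ⟶ V) :
    FactorsThru CP.W c := by
  obtain ⟨W₀, U₀, n, u, hW₀, hU₀, hses⟩ := hN
  obtain ⟨l, hl⟩ := extend_along_infl (CP := CP) hses hU₀ hV c
  exact ⟨W₀, n, l, hW₀, hl⟩

/-! ### The ideal of maps factoring through `𝒲` -/

theorem factorsThruW_zero {X Y : C} : FactorsThru CP.W (0 : X ⟶ Y) :=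
  ⟨0, 0, 0, zero_mem_W, Limits.zero_comp⟩

theorem factorsThruW_neg {X Y : C} {f : X ⟶ Y} (h : FactorsThru CP.W f) :
    FactorsThru CP.W (-f) := by
  obtain ⟨W, a, b, hW, hab⟩ := h
  exact ⟨W, -a, b, hW, by rw [Preadditive.neg_comp, hab]⟩

theorem factorsThruW_add {X Y : C} {f g : X ⟶ Y} (hf : FactorsThru CP.W f)
    (hg : FactorsThru CP.W g) : FactorsThru CP.W (f + g) := by
  obtain ⟨W₁, a₁, b₁, hW₁, h₁⟩ := hf
  obtain ⟨W₂, a₂, b₂, hW₂, h₂⟩ := hg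
  exact ⟨W₁ ⊞ W₂, biprod.lift a₁ a₂, biprod.desc b₁ b₂, W_add hW₁ hW₂,
    by rw [biprod.lift_desc, h₁, h₂]⟩

theorem factorsThruW_sub {X Y : C} {f g : X ⟶ Y} (hf : FactorsThru CP.W f)
    (hg : FactorsThru CP.W g) : FactorsThru CP.W (f - g) := by
  rw [sub_eq_add_neg]; exact factorsThruW_add hf (factorsThruW_neg hg)

theorem factorsThruW_precomp {X Y Z : C} {f : Y ⟶ Z} (h : FactorsThru CP.W f) (u : X ⟶ Y) :
    FactorsThru CP.W (u ≫ f) := by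
  obtain ⟨W, a, b, hW, hab⟩ := h
  exact ⟨W, u ≫ a, b, hW, by rw [Category.assoc, hab]⟩

theorem factorsThruW_postcomp {X Y Z : C} {f : X ⟶ Y} (h : FactorsThru CP.W f) (u : Y ⟶ Z) :
    FactorsThru CP.W (f ≫ u) := by
  obtain ⟨W, a, b, hW, hab⟩ := h
  exact ⟨W, a, b ≫ u, hW, by rw [← Category.assoc, hab]⟩

theorem factorsThruW_of_W_mid {X W' Y : C} (hW : W' ∈ CP.W) (a : X ⟶ W') (b : W' ⟶ Y) :
    FactorsThru CP.W (a ≫ b) := ⟨W', a, b, hW, rfl⟩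

theorem wRel_iff {X Y : C} {f g : X ⟶ Y} : CP.wRel f g ↔ FactorsThru CP.W (f - g) := by
  constructor
  · rintro ⟨W, a, b, hW, hab⟩; exact ⟨W, a, b, hW, hab⟩
  · rintro ⟨W, a, b, hW, hab⟩; exact ⟨W, a, b, hW, hab⟩

theorem wRel_congruence : Congruence CP.wRel := by
  refine { comp_left := ?_, comp_right := ?_, equivalence := ?_ }
  rotate_right
  · intro X Y
    constructor
    · intro f
      exact wRel_iff.2 (by rw [sub_self]; exact factorsThruW_zero)
    · intro f g h
      have := factorsThruW_neg (wRel_iff.1 h)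
      rw [neg_sub] at this
      exact wRel_iff.2 this
    · intro f g k h₁ h₂
      have := factorsThruW_add (wRel_iff.1 h₁) (wRel_iff.1 h₂)
      rw [sub_add_sub_cancel] at this
      exact wRel_iff.2 this
  · intro X Y Z f g g' h
    have := factorsThruW_precomp (wRel_iff.1 h) f
    rw [Preadditive.comp_sub] at this
    exact wRel_iff.2 this
  · intro X Y Z f f' g h
    have := factorsThruW_postcomp (wRel_iff.1 h) g
    rw [Preadditive.sub_comp] at this
    exact wRel_iff.2 this

end CotorsionPair

namespace CotorsionPair

open ExactStructure

variable {E : ExactStructure C} {CP : CotorsionPair E}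

/-- The data of a (concrete model for the) reflection of `B` into `𝓑⁺/𝒲`. -/
structure ReflDatum (CP : CotorsionPair E) (B : C) where
  M : C
  s : B ⟶ M
  hMplus : M ∈ CP.Bplus
  lift_prop : ∀ {P : C}, P ∈ CP.Bplus → ∀ f : B ⟶ P, ∃ g : M ⟶ P, s ≫ g = f
  cancel_prop : ∀ {P : C}, P ∈ CP.Bplus → ∀ g : M ⟶ P,
    FactorsThru CP.W (s ≫ g) → FactorsThru CP.W g

/-- The surjectivity half of the reflection property. -/
theorem reflLift {B Z VW U₁ M : C} {z : Z ⟶ B} (hZ : Z ∈ CP.U)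
    {m : Z ⟶ VW} {w : VW ⟶ U₁} (hm : E.IsSES m w) (hU₁ : U₁ ∈ CP.U) {s : B ⟶ M}
    (desc : ∀ {T : C} (u : B ⟶ T) (v : VW ⟶ T), z ≫ u = m ≫ v → ∃ d : M ⟶ T, s ≫ d = u)
    {P : C} (hP : P ∈ CP.Bplus) (f : B ⟶ P) : ∃ g : M ⟶ P, s ≫ g = f := by
  obtain ⟨V_P, W_P, iP, wP, hVP, hWP, hsesP⟩ := hP
  obtain ⟨h, hh⟩ := lift_along_defl (CP := CP) hsesP hVP hZ (z ≫ f)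
  obtain ⟨l, hl⟩ := extend_along_infl (CP := CP) hm hU₁ hWP.2 h
  exact desc f (l ≫ wP) (by rw [← Category.assoc, hl, hh])

/-- The injectivity (mod `𝒲`) half of the reflection property. -/
theorem reflCancel {B U₂ M : C} {s : B ⟶ M} {t : M ⟶ U₂} (hst : E.IsSES s t)
    (hU₂ : U₂ ∈ CP.U) {P : C} (hP : P ∈ CP.Bplus) (g : M ⟶ P)
    (hg : FactorsThru CP.W (s ≫ g)) : FactorsThru CP.W g := by
  obtain ⟨W₂, a, b, hW₂, hab⟩ := hg
  obtain ⟨a2, ha2⟩ := extend_along_infl (CP := CP) hst hU₂ hW₂.2 a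
  obtain ⟨c, hc⟩ := ses_coker_desc hst (g - a2 ≫ b)
    (by rw [Preadditive.comp_sub, ← Category.assoc, ha2, hab, sub_self])
  have hcW : FactorsThru CP.W c := hom_factors_of_U_Bplus hU₂ hP c
  have hgeq : g = a2 ≫ b + t ≫ c := by rw [hc]; abel
  rw [hgeq]
  exact factorsThruW_add (factorsThruW_of_W_mid hW₂ _ _) (factorsThruW_precomp hcW _)

/-- Assemble a reflection datum from concrete data. -/
noncomputable def mkReflDatum {B Z VW U₁ U₂ M : C} (z : Z ⟶ B) (hZ : Z ∈ CP.U)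
    {m : Z ⟶ VW} {w : VW ⟶ U₁} (hm : E.IsSES m w) (hU₁ : U₁ ∈ CP.U)
    (s : B ⟶ M) {t : M ⟶ U₂} (hst : E.IsSES s t) (hU₂ : U₂ ∈ CP.U)
    (hMplus : M ∈ CP.Bplus)
    (desc : ∀ {T : C} (u : B ⟶ T) (v : VW ⟶ T), z ≫ u = m ≫ v → ∃ d : M ⟶ T, s ≫ d = u) :
    ReflDatum CP B :=
  ⟨M, s, hMplus, fun hP f => reflLift hZ hm hU₁ desc hP f,
    fun hP g hg => reflCancel hst hU₂ hP g hg⟩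

end CotorsionPair

section ZeroHelpers

theorem isZero_of_retract_zero {D : Type*} [Category D] {A Z : D} (hZ : IsZero Z)
    (p : A ⟶ Z) (q : Z ⟶ A) (hpq : p ≫ q = 𝟙 A) : IsZero A := by
  constructor
  · intro Y
    haveI : Subsingleton (A ⟶ Y) := ⟨fun f g => by
      calc f = p ≫ (q ≫ f) := by rw [← Category.assoc, hpq, Category.id_comp]
      _ = p ≫ (q ≫ g) := by rw [hZ.eq_of_src (q ≫ f) (q ≫ g)]
      _ = g := by rw [← Category.assoc, hpq, Category.id_comp]⟩
    exact ⟨uniqueOfSubsingleton (p ≫ hZ.to_ Y)⟩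
  · intro Y
    haveI : Subsingleton (Y ⟶ A) := ⟨fun f g => by
      calc f = (f ≫ p) ≫ q := by rw [Category.assoc, hpq, Category.comp_id]
      _ = (g ≫ p) ≫ q := by rw [hZ.eq_of_tgt (f ≫ p) (g ≫ p)]
      _ = g := by rw [Category.assoc, hpq, Category.comp_id]⟩
    exact ⟨uniqueOfSubsingleton (hZ.from_ Y ≫ q)⟩

theorem isZero_fullSub_of {D : Type*} [Category D] {Z : D → Prop} {X : ObjectProperty.FullSubcategory Z}
    (h : IsZero X.obj) : IsZero X := by
  constructor
  · intro Y; obtain ⟨u⟩ := h.unique_to Y.obj; exact ⟨@Equiv.unique _ _ u (ObjectProperty.fullyFaithfulι (P := Z)).homEquiv⟩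
  · intro Y; obtain ⟨u⟩ := h.unique_from Y.obj; exact ⟨@Equiv.unique _ _ u (ObjectProperty.fullyFaithfulι (P := Z)).homEquiv⟩

theorem isZero_obj_of_fullSub {D : Type*} [Category D] {Z : D → Prop}
    {X T : ObjectProperty.FullSubcategory Z} (hX : IsZero X) (hT : IsZero T.obj) : IsZero X.obj := by
  have hT' : IsZero T := isZero_fullSub_of hT
  exact IsZero.of_iso hT ((ObjectProperty.ι Z).mapIso (hX.iso hT'))

theorem subsingleton_hom_of_iso {D : Type*} [Category D] {A B X : D} (e : A ≅ B)
    (h : Subsingleton (X ⟶ A)) : Subsingleton (X ⟶ B) :=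
  ⟨fun u v => by
    have h1 : u ≫ e.inv = v ≫ e.inv := Subsingleton.elim _ _
    calc u = (u ≫ e.inv) ≫ e.hom := by simp
    _ = (v ≫ e.inv) ≫ e.hom := by rw [h1]
    _ = v := by simp⟩

end ZeroHelpers

namespace CotorsionPair

open ExactStructure

variable {E : ExactStructure C} {CP : CotorsionPair E}

theorem qw_hom_surj {X : C} {Q : CP.QW} (u : CP.qf.obj X ⟶ Q) :
    ∃ f : X ⟶ Q.as, CP.qf.map f = u := by
  obtain ⟨Qas⟩ := Q
  exact CP.qf.map_surjective u

theorem qf_map_eq_iff {X Y : C} (f g : X ⟶ Y) :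
    CP.qf.map f = CP.qf.map g ↔ CP.wRel f g := by
  letI : Congruence CP.wRel := wRel_congruence
  exact Quotient.functor_map_eq_iff CP.wRel f g

theorem subsingleton_hom_iff {X Y : C} :
    Subsingleton (CP.qf.obj X ⟶ CP.qf.obj Y) ↔ ∀ f : X ⟶ Y, FactorsThru CP.W f := by
  constructor
  · intro h f
    have h1 : CP.qf.map f = CP.qf.map 0 := Subsingleton.elim _ _
    have h2 := (qf_map_eq_iff f 0).1 h1
    rw [wRel_iff, sub_zero] at h2
    exact h2
  · intro h
    constructor
    intro u v
    obtain ⟨f, rfl⟩ := qw_hom_surj (CP := CP) u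
    obtain ⟨g, rfl⟩ := qw_hom_surj (CP := CP) v
    rw [qf_map_eq_iff, wRel_iff]
    exact factorsThruW_sub (h f) (h g)

theorem zero_mem_Bplus : (0 : C) ∈ CP.Bplus :=
  ⟨0, 0, 𝟙 0, 0, zero_mem_V, zero_mem_W, E.id_ses 0⟩

theorem zero_mem_Bminus : (0 : C) ∈ CP.Bminus :=
  ⟨0, 0, 𝟙 0, 0, zero_mem_W, zero_mem_U, E.id_ses 0⟩

theorem zero_mem_Heart : (0 : C) ∈ CP.Heart := ⟨zero_mem_Bplus, zero_mem_Bminus⟩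

theorem isZero_qf_zero : IsZero (CP.qf.obj (0 : C)) := by
  constructor
  · intro Q
    obtain ⟨Qas⟩ := Q
    show Nonempty (Unique (CP.qf.obj (0 : C) ⟶ CP.qf.obj Qas))
    haveI : Subsingleton (CP.qf.obj (0 : C) ⟶ CP.qf.obj Qas) :=
      subsingleton_hom_iff.2 fun f => ⟨0, 𝟙 0, f, zero_mem_W, Category.id_comp f⟩
    exact ⟨uniqueOfSubsingleton (CP.qf.map 0)⟩
  · intro Q
    obtain ⟨Qas⟩ := Q
    show Nonempty (Unique (CP.qf.obj Qas ⟶ CP.qf.obj (0 : C)))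
    haveI : Subsingleton (CP.qf.obj Qas ⟶ CP.qf.obj (0 : C)) :=
      subsingleton_hom_iff.2 fun f => ⟨0, f, 𝟙 0, zero_mem_W, Category.comp_id f⟩
    exact ⟨uniqueOfSubsingleton (CP.qf.map 0)⟩

end CotorsionPair

namespace CotorsionPair

open ExactStructure

variable {E : ExactStructure C} {CP : CotorsionPair E}

theorem isZero_H_iff_bridge
    (σp : CP.QW ⥤ CP.BplusCat) (adj₁ : σp ⊣ CP.inclPlus)
    (σm : CP.QW ⥤ CP.BminusCat) (adj₂ : CP.inclMinus ⊣ σm)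
    (H : C ⥤ CP.HeartCat)
    (hH : H ⋙ CP.inclHeart = CP.qf ⋙ σp ⋙ CP.inclPlus ⋙ σm ⋙ CP.inclMinus)
    (B : C) (RD : ReflDatum CP B) :
    IsZero (H.obj B) ↔ ∀ (N : C), N ∈ CP.Bminus → ∀ f : N ⟶ RD.M, FactorsThru CP.W f := by
  classical
  set Aplus : CP.QW := CP.inclPlus.obj (σp.obj (CP.qf.obj B)) with hAplusdef
  have hAmem : Aplus.as ∈ CP.Bplus := (σp.obj (CP.qf.obj B)).property
  have hMmem : (CP.qf.obj RD.M).as ∈ CP.Bplus := RD.hMplus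
  let MQ : CP.BplusCat := ⟨CP.qf.obj RD.M, hMmem⟩
  let η : CP.qf.obj B ⟶ Aplus := adj₁.unit.app (CP.qf.obj B)
  let abar : σp.obj (CP.qf.obj B) ⟶ MQ :=
    (adj₁.homEquiv (CP.qf.obj B) MQ).symm (CP.qf.map RD.s)
  let a : Aplus ⟶ CP.qf.obj RD.M := CP.inclPlus.map abar
  have hηa : η ≫ a = CP.qf.map RD.s := by
    have h1 := adj₁.homEquiv_unit (X := CP.qf.obj B) (Y := MQ) (f := abar)
    have h2 : (adj₁.homEquiv (CP.qf.obj B) MQ) abar = CP.qf.map RD.s :=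
      Equiv.apply_symm_apply _ _
    rw [h1] at h2
    exact h2
  obtain ⟨e₀, he₀⟩ := qw_hom_surj (CP := CP) (Q := Aplus) η
  obtain ⟨gb, hgb⟩ := RD.lift_prop hAmem e₀
  let b : CP.qf.obj RD.M ⟶ Aplus := CP.qf.map gb
  have hcancelη : ∀ (Y : CP.BplusCat) (u₁ u₂ : Aplus ⟶ CP.inclPlus.obj Y),
      η ≫ u₁ = η ≫ u₂ → u₁ = u₂ := by
    intro Y u₁ u₂ hu
    have e1 : (adj₁.homEquiv (CP.qf.obj B) Y) (ObjectProperty.homMk u₁) =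
        (adj₁.homEquiv (CP.qf.obj B) Y) (ObjectProperty.homMk u₂) := by
      rw [adj₁.homEquiv_unit, adj₁.homEquiv_unit]
      exact hu
    exact congrArg InducedCategory.Hom.hom ((adj₁.homEquiv _ _).injective e1)
  have hab : a ≫ b = 𝟙 Aplus := by
    refine hcancelη (σp.obj (CP.qf.obj B)) (a ≫ b) (𝟙 Aplus) ?_
    rw [← Category.assoc, hηa, Category.comp_id]
    show CP.qf.map RD.s ≫ CP.qf.map gb = η
    rw [← CP.qf.map_comp, hgb, he₀]
  have hba : b ≫ a = 𝟙 (CP.qf.obj RD.M) := by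
    obtain ⟨a₀, ha₀⟩ : ∃ f : Aplus.as ⟶ RD.M, CP.qf.map f = a :=
      qw_hom_surj (CP := CP) (X := Aplus.as) (Q := CP.qf.obj RD.M) a
    have h1 : b ≫ a = CP.qf.map (gb ≫ a₀) := by rw [CP.qf.map_comp, ha₀]
    have h2 : CP.qf.map (RD.s ≫ (gb ≫ a₀)) = CP.qf.map (RD.s ≫ 𝟙 RD.M) := by
      have h2a : CP.qf.map RD.s ≫ CP.qf.map gb ≫ CP.qf.map a₀ = CP.qf.map RD.s := by
        rw [← Category.assoc, ← CP.qf.map_comp, hgb, he₀, ha₀, hηa]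
      calc CP.qf.map (RD.s ≫ (gb ≫ a₀))
          = CP.qf.map RD.s ≫ CP.qf.map gb ≫ CP.qf.map a₀ := by
            rw [CP.qf.map_comp, CP.qf.map_comp]
      _ = CP.qf.map RD.s := h2a
      _ = CP.qf.map (RD.s ≫ 𝟙 RD.M) := by rw [Category.comp_id]
    have h3 : CP.wRel (RD.s ≫ (gb ≫ a₀)) (RD.s ≫ 𝟙 RD.M) := (qf_map_eq_iff _ _).1 h2
    have h4 : FactorsThru CP.W (RD.s ≫ (gb ≫ a₀ - 𝟙 RD.M)) := by
      have h4a := wRel_iff.1 h3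
      rwa [← Preadditive.comp_sub] at h4a
    have h5 := RD.cancel_prop RD.hMplus _ h4
    have h6 : CP.wRel (gb ≫ a₀) (𝟙 RD.M) := wRel_iff.2 h5
    have h7 : CP.qf.map (gb ≫ a₀) = CP.qf.map (𝟙 RD.M) := (qf_map_eq_iff _ _).2 h6
    rw [h1, h7, CP.qf.map_id]
  let eM : Aplus ≅ CP.qf.obj RD.M := ⟨a, b, hab, hba⟩
  have hobj : CP.inclHeart.obj (H.obj B) = CP.inclMinus.obj (σm.obj Aplus) :=
    Functor.congr_obj hH B
  let T₀h : CP.HeartCat := ⟨CP.qf.obj 0, zero_mem_Heart⟩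
  let T₀m : CP.BminusCat := ⟨CP.qf.obj 0, zero_mem_Bminus⟩
  constructor
  · intro hz
    have hz1 : IsZero (CP.inclHeart.obj (H.obj B)) :=
      isZero_obj_of_fullSub (T := T₀h) hz isZero_qf_zero
    rw [hobj] at hz1
    have hz2 : IsZero (σm.obj Aplus) := isZero_fullSub_of hz1
    intro N hN f
    haveI hsub : Subsingleton ((⟨CP.qf.obj N, hN⟩ : CP.BminusCat) ⟶ σm.obj Aplus) :=
      ⟨fun u v => hz2.eq_of_tgt u v⟩
    haveI hsub2 : Subsingleton (CP.qf.obj N ⟶ Aplus) := ⟨fun u v => by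
      exact (adj₂.homEquiv (⟨CP.qf.obj N, hN⟩ : CP.BminusCat) Aplus).injective
        (Subsingleton.elim _ _)⟩
    haveI hsub3 : Subsingleton (CP.qf.obj N ⟶ CP.qf.obj RD.M) :=
      subsingleton_hom_of_iso eM hsub2
    exact subsingleton_hom_iff.1 hsub3 f
  · intro hfor
    have hsub : ∀ Nc : CP.BminusCat, Subsingleton (CP.inclMinus.obj Nc ⟶ Aplus) := by
      intro Nc
      obtain ⟨⟨Nas⟩, hN⟩ := Nc
      have h1 : Subsingleton (CP.qf.obj Nas ⟶ CP.qf.obj RD.M) :=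
        subsingleton_hom_iff.2 (hfor Nas hN)
      exact subsingleton_hom_of_iso eM.symm h1
    haveI hEnd : Subsingleton (σm.obj Aplus ⟶ σm.obj Aplus) := ⟨fun u v => by
      apply (adj₂.homEquiv (σm.obj Aplus) Aplus).symm.injective
      exact (hsub (σm.obj Aplus)).elim _ _⟩
    have hT₀m : IsZero T₀m := isZero_fullSub_of (X := T₀m) isZero_qf_zero
    have hz2 : IsZero (σm.obj Aplus) :=
      isZero_of_retract_zero hT₀m (hT₀m.from_ _) (hT₀m.to_ _) (hEnd.elim _ _)
    have hz1 : IsZero (CP.inclMinus.obj (σm.obj Aplus)) :=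
      isZero_obj_of_fullSub (T := T₀m) hz2 isZero_qf_zero
    rw [← hobj] at hz1
    exact isZero_fullSub_of hz1

end CotorsionPair

namespace ExactStructure

variable {E : ExactStructure C}

/-- A morphism of conflations over the same cokernel is a pushout square. -/
theorem conflation_isPushout {A₁ B₁ A₂ B₂ Cc : C} {f₁ : A₁ ⟶ B₁} {g₁ : B₁ ⟶ Cc}
    (h₁ : E.IsSES f₁ g₁) {f₂ : A₂ ⟶ B₂} {g₂ : B₂ ⟶ Cc} (h₂ : E.IsSES f₂ g₂)
    {α : A₁ ⟶ A₂} {β : B₁ ⟶ B₂} (hsq : f₁ ≫ β = α ≫ f₂) (hco : β ≫ g₂ = g₁) :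
    IsPushout α f₁ f₂ β := by
  obtain ⟨D, d₁, d₂, hpb, hdefl⟩ := E.pullback_defl g₂ g₁ ⟨A₂, f₂, h₂⟩
  obtain ⟨ℓ, hℓ₁, hℓ₂, hℓses⟩ := ses_of_isPullback h₁ hpb.flip
  obtain ⟨κD, hκD₁, hκD₂, hκDses⟩ := ses_of_isPullback h₂ hpb
  have hmκ : Mono κD := ses_mono hκDses
  have hepi : Epi d₂ := ses_epi hℓses
  set θ : B₁ ⟶ D := hpb.lift (𝟙 B₁) β (by rw [Category.id_comp, hco]) with hθdef
  have hθ₁ : θ ≫ d₁ = 𝟙 B₁ := hpb.lift_fst _ _ _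
  have hθ₂ : θ ≫ d₂ = β := hpb.lift_snd _ _ _
  obtain ⟨t, ht⟩ := ses_kernel_lift hκDses (𝟙 D - d₁ ≫ θ)
    (by rw [Preadditive.sub_comp, Category.id_comp, Category.assoc, hθ₁, Category.comp_id,
      sub_self])
  have hκt : κD ≫ t = 𝟙 A₂ := by
    rw [← cancel_mono κD, Category.assoc, ht, Preadditive.comp_sub, Category.comp_id,
      ← Category.assoc, hκD₁, Limits.zero_comp, sub_zero, Category.id_comp]
  have hθt : θ ≫ t = 0 := by
    rw [← cancel_mono κD, Category.assoc, ht, Preadditive.comp_sub, Category.comp_id,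
      ← Category.assoc, hθ₁, Category.id_comp, sub_self, Limits.zero_comp]
  have hℓt : ℓ ≫ t = -α := by
    rw [← cancel_mono κD]
    have e1 : (ℓ ≫ t) ≫ κD = ℓ - f₁ ≫ θ := by
      rw [Category.assoc, ht, Preadditive.comp_sub, Category.comp_id, ← Category.assoc, hℓ₂]
    rw [e1]
    apply hpb.hom_ext
    · simp [Preadditive.sub_comp, Preadditive.neg_comp, Category.assoc, hθ₁, hℓ₂, hκD₁]
    · simp [Preadditive.sub_comp, Preadditive.neg_comp, Category.assoc, hθ₂, hℓ₁, hκD₂, hsq]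
  have hidD : d₁ ≫ θ + t ≫ κD = 𝟙 D := by rw [ht]; abel
  -- build the pushout
  have comm : α ≫ f₂ = f₁ ≫ β := hsq.symm
  have hu' : ∀ s : PushoutCocone α f₁, ℓ ≫ (d₁ ≫ s.inr + t ≫ s.inl) = 0 := by
    intro s
    rw [Preadditive.comp_add, ← Category.assoc, ← Category.assoc, hℓ₂, hℓt,
      Preadditive.neg_comp, ← s.condition]
    exact add_neg_cancel _
  refine IsPushout.of_isColimit (PushoutCocone.IsColimit.mk comm
    (fun s => (ses_coker_desc hℓses _ (hu' s)).choose) ?_ ?_ ?_)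
  · intro s
    have hw := (ses_coker_desc hℓses _ (hu' s)).choose_spec
    rw [← hκD₂, Category.assoc, hw, Preadditive.comp_add, ← Category.assoc, ← Category.assoc,
      hκD₁, Limits.zero_comp, zero_add, hκt, Category.id_comp]
  · intro s
    have hw := (ses_coker_desc hℓses _ (hu' s)).choose_spec
    rw [← hθ₂, Category.assoc, hw, Preadditive.comp_add, ← Category.assoc, ← Category.assoc,
      hθ₁, Category.id_comp, hθt, Limits.zero_comp, add_zero]
  · intro s m hm₁ hm₂
    have hw := (ses_coker_desc hℓses _ (hu' s)).choose_spec
    rw [← cancel_epi d₂, hw]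
    have : d₂ ≫ m = (d₁ ≫ θ + t ≫ κD) ≫ (d₂ ≫ m) := by rw [hidD, Category.id_comp]
    rw [this, Preadditive.add_comp]
    congr 1
    · rw [Category.assoc, ← Category.assoc θ, hθ₂, ← Category.assoc, Category.assoc, hm₂]
    · rw [Category.assoc, ← Category.assoc κD, hκD₂, ← Category.assoc, Category.assoc, hm₁]

end ExactStructure

namespace CotorsionPair

open ExactStructure

variable {E : ExactStructure C} {CP : CotorsionPair E}

theorem isZero_retract_functor {D : Type*} [Category D] (F : C ⥤ D) (B Y : C)
    (h : IsZero (F.obj (B ⊞ Y))) : IsZero (F.obj B) := by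
  refine isZero_of_retract_zero h (F.map biprod.inl) (F.map biprod.fst) ?_
  rw [← F.map_comp, biprod.inl_fst, F.map_id]

theorem isZero_H_of_ses (σp : CP.QW ⥤ CP.BplusCat) (adj₁ : σp ⊣ CP.inclPlus)
    (σm : CP.QW ⥤ CP.BminusCat) (adj₂ : CP.inclMinus ⊣ σm)
    (H : C ⥤ CP.HeartCat)
    (hH : H ⋙ CP.inclHeart = CP.qf ⋙ σp ⋙ CP.inclPlus ⋙ σm ⋙ CP.inclMinus)
    {X U₀ V₀ : C} {i : U₀ ⟶ X} {p : X ⟶ V₀} (hses : E.IsSES i p)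
    (hU₀ : U₀ ∈ CP.U) (hV₀ : V₀ ∈ CP.V) : IsZero (H.obj X) := by
  classical
  -- resolution of V₀
  obtain ⟨V'', UV₀, a₀, q, hV'', hUV₀, hq⟩ := CP.res V₀
  -- Z := X ×_{V₀} UV₀
  obtain ⟨Z, z, ζ', hpbZ, hdz⟩ := E.pullback_defl q p ⟨V'', a₀, hq⟩
  obtain ⟨χZ, hχZ₁, hχZ₂, hχZ⟩ := ses_of_isPullback hq hpbZ
  obtain ⟨χζ, hχζ₁, hχζ₂, hχζ⟩ := ses_of_isPullback hses hpbZ.flip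
  have hZU : Z ∈ CP.U := U_ext (CP := CP) hχζ hU₀ hUV₀
  -- coresolutions
  obtain ⟨V₇, U₇, m₄, w₄, hV₇v, hU₇, hm₄⟩ := CP.cores Z
  have hV₇ : V₇ ∈ CP.W := ⟨U_ext (CP := CP) hm₄ hZU hU₇, hV₇v⟩
  obtain ⟨V₆, U₆, m₃, w₆, hV₆v, hU₆, hm₃⟩ := CP.cores UV₀
  have hV₆ : V₆ ∈ CP.W := ⟨U_ext (CP := CP) hm₃ hUV₀ hU₆, hV₆v⟩
  -- M' := pushout of m₄ along z
  obtain ⟨M', s', k', hpoM, hiM⟩ := E.pushout_infl m₄ z ⟨U₇, w₄, hm₄⟩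
  obtain ⟨t', ht'₁, hk't', hst'⟩ := ses_of_isPushout hm₄ hpoM
  have hk'ses : E.IsSES (χZ ≫ m₄) k' := ses_parallel_of_isPushout hχZ ⟨U₇, w₄, hm₄⟩ hpoM
  have hMplus : (M' ⊞ V₆) ∈ CP.Bplus :=
    ⟨V'', V₇ ⊞ V₆, (χZ ≫ m₄) ≫ biprod.inl, biprod.map k' (𝟙 V₆), hV'',
      W_add hV₇ hV₆, ses_map_inl hk'ses V₆⟩
  -- cokernel of s' ≫ inl
  obtain ⟨U₂, t₂, cc, cc', htt, hcc₁, hcc₂, hccses⟩ :=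
    ses_noether hst' (ses_biprod_inl_snd M' V₆)
  have hU₂ : U₂ ∈ CP.U := U_ext (CP := CP) hccses hU₇ hV₆.1
  have hdesc : ∀ {T : C} (u : X ⟶ T) (v : V₇ ⟶ T), z ≫ u = m₄ ≫ v →
      ∃ d : M' ⊞ V₆ ⟶ T, (s' ≫ biprod.inl) ≫ d = u := by
    intro T u v huv
    refine ⟨biprod.desc (hpoM.desc u v huv) 0, ?_⟩
    rw [Category.assoc, biprod.inl_desc, hpoM.inl_desc]
  let RD : ReflDatum CP X :=
    { M := M' ⊞ V₆, s := s' ≫ biprod.inl, hMplus := hMplus,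
      lift_prop := fun hP f => reflLift hZU hm₄ hU₇ hdesc hP f,
      cancel_prop := fun hP g hg => reflCancel htt hU₂ hP g hg }
  -- the deflation p⁺ : M' ⊞ V₆ → V₀ with kernel in 𝒰
  obtain ⟨N₁, g₄, c₅, π₇, hg₄, hc₅sq, hπ₇sq, hc₅π₇⟩ := ses_noether hses hst'
  obtain ⟨r₁, hr₁⟩ := extend_along_infl (CP := CP) hc₅π₇ hU₇ hV₀ (𝟙 V₀)
  obtain ⟨w₀, hw₀g, hw₀r, hw₀id, hw₀ses⟩ := ses_complement hc₅π₇ hr₁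
  obtain ⟨K', κ', jK, kK, hκ'ses, hjκ, hκd, hjk⟩ := ses_conoether hg₄ hw₀ses
  have hK' : K' ∈ CP.U := U_ext (CP := CP) hjk hU₀ hU₇
  obtain ⟨φ₁, hφ₁⟩ := extend_along_infl (CP := CP) hm₃ hU₆ hV₀ q
  have hmap : E.IsSES (κ' ≫ biprod.inl) (biprod.map (g₄ ≫ r₁) (𝟙 V₆)) := ses_map_inl hκ'ses V₆
  have hdesc₂ : E.IsSES (biprod.lift (-φ₁) (𝟙 V₆)) (biprod.desc (𝟙 V₀) φ₁ : V₀ ⊞ V₆ ⟶ V₀) := by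
    refine ses_of_split biprod.snd biprod.inl (by simp) (by simp) (by simp) (by simp) ?_
    apply biprod.hom_ext' <;> apply biprod.hom_ext <;> simp
  obtain ⟨Kt, κt, jt, kt, hκtses, hjκt, hκdt, hjkt⟩ := ses_conoether hmap hdesc₂
  have hKt : Kt ∈ CP.U := U_ext (CP := CP) hjkt hK' hV₆.1
  set pplus : M' ⊞ V₆ ⟶ V₀ :=
    biprod.map (g₄ ≫ r₁) (𝟙 V₆) ≫ biprod.desc (𝟙 V₀) φ₁ with hpplusdef
  have hκtfull : E.IsSES κt pplus := hκtses
  have hjp : (m₃ ≫ biprod.inr) ≫ pplus = q := by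
    rw [hpplusdef]
    simp [hφ₁]
  -- bridge
  refine (isZero_H_iff_bridge σp adj₁ σm adj₂ H hH X RD).2 ?_
  intro N hN f
  obtain ⟨W_N, U_N, n, uN, hW_N, hU_N, hNses⟩ := hN
  obtain ⟨c1, hc1⟩ := extend_along_infl (CP := CP) hNses hU_N hV₀ (f ≫ pplus)
  obtain ⟨d1, hd1⟩ := lift_along_defl (CP := CP) hq hV'' hW_N.1 c1
  have e1 : (n ≫ (d1 ≫ (m₃ ≫ biprod.inr))) ≫ pplus = n ≫ c1 := by
    calc (n ≫ (d1 ≫ (m₃ ≫ biprod.inr))) ≫ pplus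
        = n ≫ d1 ≫ ((m₃ ≫ biprod.inr) ≫ pplus) := by simp only [Category.assoc]
    _ = n ≫ c1 := by rw [hjp, hd1]
  have hf₁p : (f - n ≫ (d1 ≫ (m₃ ≫ biprod.inr))) ≫ pplus = 0 := by
    rw [Preadditive.sub_comp, e1, ← hc1, sub_self]
  obtain ⟨f₂, hf₂⟩ := ses_kernel_lift hκtfull (f - n ≫ (d1 ≫ (m₃ ≫ biprod.inr))) hf₁p
  have hfin : f = f₂ ≫ κt + n ≫ (d1 ≫ (m₃ ≫ biprod.inr)) := by rw [hf₂]; abel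
  rw [hfin]
  exact factorsThruW_add
    (factorsThruW_precomp (hom_factors_of_U_Bplus hKt hMplus κt) f₂)
    (factorsThruW_of_W_mid hW_N _ _)

end CotorsionPair

namespace CotorsionPair

open ExactStructure

variable {E : ExactStructure C} {CP : CotorsionPair E}

theorem mem_addUV_of_isZero (σp : CP.QW ⥤ CP.BplusCat) (adj₁ : σp ⊣ CP.inclPlus)
    (σm : CP.QW ⥤ CP.BminusCat) (adj₂ : CP.inclMinus ⊣ σm)
    (H : C ⥤ CP.HeartCat)
    (hH : H ⋙ CP.inclHeart = CP.qf ⋙ σp ⋙ CP.inclPlus ⋙ σm ⋙ CP.inclMinus)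
    (B : C) (hz : IsZero (H.obj B)) : B ∈ CP.addUV := by
  classical
  -- generic reflection datum for B
  obtain ⟨Vk, UB, χB, z, hVk, hUB, hzses⟩ := CP.res B
  obtain ⟨W₁, U', m, w', hW₁v, hU', hm⟩ := CP.cores UB
  have hW₁ : W₁ ∈ CP.W := ⟨U_ext (CP := CP) hm hUB hU', hW₁v⟩
  obtain ⟨M, s, k, hpoM, hiM⟩ := E.pushout_infl m z ⟨U', w', hm⟩
  obtain ⟨t, ht0, hkt, hst⟩ := ses_of_isPushout hm hpoM
  have hkses : E.IsSES (χB ≫ m) k := ses_parallel_of_isPushout hzses ⟨U', w', hm⟩ hpoM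
  have hMplus : M ∈ CP.Bplus := ⟨Vk, W₁, χB ≫ m, k, hVk, hW₁, hkses⟩
  have hdesc : ∀ {T : C} (u : B ⟶ T) (v : W₁ ⟶ T), z ≫ u = m ≫ v →
      ∃ d : M ⟶ T, s ≫ d = u := fun u v huv => ⟨hpoM.desc u v huv, hpoM.inl_desc _ _ _⟩
  let RD : ReflDatum CP B :=
    { M := M, s := s, hMplus := hMplus,
      lift_prop := fun hP f => reflLift hUB hm hU' hdesc hP f,
      cancel_prop := fun hP g hg => reflCancel hst hU' hP g hg }
  have hvan := (isZero_H_iff_bridge σp adj₁ σm adj₂ H hH B RD).1 hz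
  -- cores of M, and a resolution of its target
  obtain ⟨V₂, U₂, v, w₂, hV₂, hU₂, hv⟩ := CP.cores M
  obtain ⟨V₃, U₃, a₉, q₂, hV₃, hU₃u, hq₂⟩ := CP.res V₂
  have hU₃ : U₃ ∈ CP.W := ⟨hU₃u, V_ext (CP := CP) hq₂ hV₃ hV₂⟩
  -- the coreflection C⁻ of M
  obtain ⟨Cm, ε, b₇, hpbC, hdC⟩ := E.pullback_defl q₂ v ⟨V₃, a₉, hq₂⟩
  obtain ⟨χ₃, hχ₃₁, hχ₃₂, hχ₃ses⟩ := ses_of_isPullback hq₂ hpbC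
  have hb₇ : E.IsSES b₇ (q₂ ≫ w₂) := ses_parallel_of_isPullback hv ⟨V₃, a₉, hq₂⟩ hpbC
  have hCmMinus : Cm ∈ CP.Bminus := ⟨U₃, U₂, b₇, q₂ ≫ w₂, hU₃, hU₂, hb₇⟩
  -- vanishing of H B forces C⁻ ∈ 𝒲
  obtain ⟨W₄, aε, bε, hW₄, habε⟩ := hvan Cm hCmMinus ε
  obtain ⟨bhat, hbhat⟩ := lift_along_defl (CP := CP) hχ₃ses hV₃ hW₄.1 bε
  obtain ⟨g₃, hg₃⟩ := ses_kernel_lift hχ₃ses (𝟙 Cm - aε ≫ bhat)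
    (by rw [Preadditive.sub_comp, Category.id_comp, Category.assoc, hbhat, habε, sub_self])
  have hg₃W : FactorsThru CP.W (g₃ ≫ χ₃) :=
    factorsThruW_postcomp (hom_factors_of_Bminus_V (CP := CP) hCmMinus hV₃ g₃) χ₃
  have hidW : FactorsThru CP.W (𝟙 Cm) := by
    have e0 : 𝟙 Cm = g₃ ≫ χ₃ + aε ≫ bhat := by rw [hg₃]; abel
    rw [e0]
    exact factorsThruW_add hg₃W (factorsThruW_of_W_mid hW₄ _ _)
  obtain ⟨W₅, a5, b5, hW₅, hab5⟩ := hidW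
  have hCmW : Cm ∈ CP.W := W_summand hW₅ ⟨a5, b5, hab5⟩
  -- the pullback P and the biproduct conflation
  obtain ⟨P, δ, b₅, hpbP, hdP⟩ := E.pullback_defl q₂ (s ≫ v) ⟨V₃, a₉, hq₂⟩
  have hbigses : E.IsSES (biprod.lift δ b₅) (biprod.desc (s ≫ v) (-q₂)) :=
    ses_pullback_biprod hq₂ hpbP
  -- auxiliary maps
  obtain ⟨κh, hκh⟩ := lift_along_defl (CP := CP) hq₂ hV₃ hW₁.1 (k ≫ v)
  have hlamcond : z ≫ (s ≫ v) = (m ≫ κh) ≫ q₂ := by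
    rw [← Category.assoc, hpoM.w, Category.assoc, Category.assoc, hκh]
  let lam0 : UB ⟶ P := hpbP.lift z (m ≫ κh) hlamcond
  have hlamd : lam0 ≫ δ = z := hpbP.lift_fst _ _ _
  have hlamb : lam0 ≫ b₅ = m ≫ κh := hpbP.lift_snd _ _ _
  have hμcond : (δ ≫ s) ≫ v = b₅ ≫ q₂ := by rw [Category.assoc]; exact hpbP.w
  let μt : P ⟶ Cm := hpbC.lift (δ ≫ s) b₅ hμcond
  have hμε : μt ≫ ε = δ ≫ s := hpbC.lift_fst _ _ _
  have hμb : μt ≫ b₇ = b₅ := hpbC.lift_snd _ _ _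
  -- the pasted pullback square
  have hpbPC : IsPullback δ μt s ε := by
    have comm : δ ≫ s = μt ≫ ε := hμε.symm
    refine IsPullback.of_isLimit (PullbackCone.IsLimit.mk comm
      (fun c => hpbP.lift c.fst (c.snd ≫ b₇)
        (by rw [← Category.assoc, c.condition, Category.assoc, Category.assoc, ← hpbC.w]))
      (fun c => hpbP.lift_fst _ _ _) (fun c => ?_) (fun c m' hm₁ hm₂ => ?_))
    · apply hpbC.hom_ext
      · rw [Category.assoc, hμε, ← Category.assoc, hpbP.lift_fst, c.condition]
      · rw [Category.assoc, hμb, hpbP.lift_snd]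
    · apply hpbP.hom_ext
      · rw [hpbP.lift_fst, hm₁]
      · rw [hpbP.lift_snd, ← hm₂, Category.assoc, hμb]
  have hμtses : E.IsSES μt (ε ≫ t) := ses_parallel_of_isPullback hst ⟨V₃, χ₃, hχ₃ses⟩ hpbPC
  let khat : W₁ ⟶ Cm := hpbC.lift k κh hκh.symm
  have hkhatε : khat ≫ ε = k := hpbC.lift_fst _ _ _
  have hkhatb : khat ≫ b₇ = κh := hpbC.lift_snd _ _ _
  have hsqT : m ≫ khat = lam0 ≫ μt := by
    apply hpbC.hom_ext
    · simp only [Category.assoc, hkhatε, hμε]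
      rw [← Category.assoc, hlamd, hpoM.w]
    · simp only [Category.assoc, hkhatb, hμb]
      rw [hlamb]
  have hkc : khat ≫ (ε ≫ t) = w' := by rw [← Category.assoc, hkhatε, hkt]
  have hpoT : IsPushout lam0 m μt khat := conflation_isPushout hm hμtses hsqT hkc
  -- P ∈ 𝒰
  obtain ⟨V_P, U_P, aP, eP, hV_P, hU_P, hPses⟩ := CP.res P
  obtain ⟨σ₀, hσ₀⟩ := lift_along_defl (CP := CP) hPses hV_P hUB lam0
  obtain ⟨F', j₅, w₅, hpoF, hiF⟩ := E.pushout_infl m σ₀ ⟨U', w', hm⟩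
  obtain ⟨Z₉, g₉, h₉⟩ := E.infl_comp aP j₅ ⟨P, eP, hPses⟩ hiF
  have hψcond : σ₀ ≫ (eP ≫ μt) = m ≫ khat := by
    rw [← Category.assoc, hσ₀, hsqT]
  let ψ₅ : F' ⟶ Cm := hpoF.desc (eP ≫ μt) khat hψcond
  have hψ₁ : j₅ ≫ ψ₅ = eP ≫ μt := hpoF.inl_desc _ _ _
  have hψ₂ : w₅ ≫ ψ₅ = khat := hpoF.inr_desc _ _ _
  have hψses : E.IsSES (aP ≫ j₅) ψ₅ := by
    refine isSES_of_isCokernel h₉ ?_ ?_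
    · rw [Category.assoc, hψ₁, ← Category.assoc, E.comp_zero hPses, Limits.zero_comp]
    · intro T u hu
      have hu' : aP ≫ (j₅ ≫ u) = 0 := by rw [← Category.assoc]; exact hu
      obtain ⟨u₁, hu₁⟩ := ses_coker_desc hPses (j₅ ≫ u) hu'
      have hcond2 : lam0 ≫ u₁ = m ≫ (w₅ ≫ u) := by
        rw [← hσ₀, Category.assoc, hu₁, ← Category.assoc, hpoF.w, Category.assoc]
      refine ⟨hpoT.desc u₁ (w₅ ≫ u) hcond2, ?_, ?_⟩
      · apply hpoF.hom_ext
        · rw [← Category.assoc, hψ₁, Category.assoc, hpoT.inl_desc, hu₁]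
        · rw [← Category.assoc, hψ₂, hpoT.inr_desc]
      · intro w'' hw''
        have hepi : Epi eP := ses_epi hPses
        have e2 : μt ≫ w'' = u₁ := by
          rw [← cancel_epi eP, ← Category.assoc, ← hψ₁, Category.assoc, hw'', hu₁]
        have e3 : khat ≫ w'' = w₅ ≫ u := by
          rw [← hψ₂, Category.assoc, hw'']
        apply hpoT.hom_ext
        · rw [e2, hpoT.inl_desc]
        · rw [e3, hpoT.inr_desc]
  obtain ⟨ρ, hρ⟩ := CP.ext_vanish hψses hCmW.1 hV_P
  have hretr : aP ≫ (j₅ ≫ ρ) = 𝟙 V_P := by rw [← Category.assoc]; exact hρ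
  obtain ⟨σP, hσP⟩ := section_of_retraction hPses hretr
  have hPU : P ∈ CP.U := CP.U_summand hU_P ⟨σP, eP, hσP⟩
  exact ⟨U₃, P, V₂, biprod.lift δ b₅, biprod.desc (s ≫ v) (-q₂), hPU, hV₂, hbigses⟩

end CotorsionPair

/-- `H(B) = 0` iff `B ∈ add(𝒰 ∗ 𝒱)`. -/
theorem stmt12 (E : ExactStructure C) (CP : CotorsionPair E)
    (hEP : E.EnoughProj) (hEI : E.EnoughInj)
    (σp : CP.QW ⥤ CP.BplusCat) (adj₁ : σp ⊣ CP.inclPlus)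
    (σm : CP.QW ⥤ CP.BminusCat) (adj₂ : CP.inclMinus ⊣ σm)
    (H : C ⥤ CP.HeartCat)
    (hH : H ⋙ CP.inclHeart =
      CP.qf ⋙ σp ⋙ CP.inclPlus ⋙ σm ⋙ CP.inclMinus)
    [Abelian CP.HeartCat]
    (B : C) :
    IsZero (H.obj B) ↔ B ∈ CP.addUV := by
  constructor
  · intro hz
    exact CotorsionPair.mem_addUV_of_isZero σp adj₁ σm adj₂ H hH B hz
  · rintro ⟨Y, U₀, V₀, i, p, hU₀, hV₀, hses⟩
    exact CotorsionPair.isZero_retract_functor H B Y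
      (CotorsionPair.isZero_H_of_ses σp adj₁ σm adj₂ H hH hses hU₀ hV₀)
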